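/- arXiv:2410.00438 — 2 statements merged into one kernel-verified Lean document; each statement's English description precedes it below -/
import Mathlib

section
/- Let γ be convex, positively homogeneous of degree one, and C¹ away from 0. Then for all nonzero h, ĥ ∈ ℝ², with n̂ = −ĥ^⊥/|ĥ|, one has γ(−ĥ^⊥) − γ(−h^⊥) ≤ (Z_k(n̂) ĥ/|ĥ|) · (ĥ − h) for any choice of the stabilizing function k(n̂), where Z_k(n) = γ(n)I₂ − n∇γ(n)ᵀ − ∇γ(n)nᵀ + k(n)nnᵀ. -/
open scoped RealInnerProductSpace
noncomputable section
abbrev E := EuclideanSpace ℝ (Fin 2)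
def toE (v : Fin 2 → ℝ) : E := (WithLp.equiv 2 (Fin 2 → ℝ)).symm v
def toV (p : E) : Fin 2 → ℝ := fun i => p i
/-- clockwise rotation by π/2 : (a,b)^⊥ = (b,-a) -/
def perp (p : E) : E := toE ![p 1, -(p 0)]

/-- symmetrized surface energy matrix Z_k(n) = γ(n)I₂ − n∇γ(n)ᵀ − ∇γ(n)nᵀ + k nnᵀ -/
def Zmat (γ : E → ℝ) (k : ℝ) (n : E) : Matrix (Fin 2) (Fin 2) ℝ :=
  γ n • (1 : Matrix (Fin 2) (Fin 2) ℝ)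
    - Matrix.vecMulVec (toV n) (toV (gradient γ n))
    - Matrix.vecMulVec (toV (gradient γ n)) (toV n)
    + k • Matrix.vecMulVec (toV n) (toV n)

lemma perp_neg_ne_zero (p : E) (hp : p ≠ 0) : -perp p ≠ 0 := by
  intro hc
  apply hp
  have h0 := congrFun (congrArg (fun q : E => toV q) hc) 0
  have h1 := congrFun (congrArg (fun q : E => toV q) hc) 1
  simp [toV, perp, toE] at h0 h1
  ext i
  fin_cases i <;> simp [h0, h1]

/-- Convexity estimate in terms of Z_k(n̂), for any stabilizing value k. -/
theorem convexity_estimate_Zmat (γ : E → ℝ)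
    (hhom : ∀ l : ℝ, 0 < l → ∀ p : E, γ (l • p) = l * γ p)
    (hdiff : ∀ p : E, p ≠ 0 → DifferentiableAt ℝ γ p)
    (hconv : ∀ u v : E, u ≠ 0 → v ≠ 0 → γ u - γ v ≤ ⟪gradient γ u, u - v⟫)
    (h hh : E) (hh0 : h ≠ 0) (hhh0 : hh ≠ 0) (k : ℝ) :
    γ (-perp hh) - γ (-perp h)
      ≤ ⟪toE ((Zmat γ k (‖hh‖⁻¹ • (-perp hh))).mulVec (toV (‖hh‖⁻¹ • hh))), hh - h⟫ := by
  have hnorm : (0:ℝ) < ‖hh‖ := norm_pos_iff.mpr hhh0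
  set n : E := ‖hh‖⁻¹ • (-perp hh) with hn
  set g : E := gradient γ n with hg
  have hph : -perp hh ≠ 0 := perp_neg_ne_zero hh hhh0
  have hn0 : n ≠ 0 := smul_ne_zero (inv_ne_zero hnorm.ne') hph
  -- Euler identity
  have heuler : γ n = ⟪g, n⟫ := by
    have e1 := hconv n ((2:ℝ) • n) hn0 (smul_ne_zero two_ne_zero hn0)
    have e2 := hconv n ((2⁻¹:ℝ) • n) hn0 (smul_ne_zero (by norm_num) hn0)
    rw [hhom 2 (by norm_num)] at e1
    rw [hhom 2⁻¹ (by norm_num)] at e2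
    have i1 : ⟪g, n - (2:ℝ) • n⟫ = -⟪g, n⟫ := by
      rw [show n - (2:ℝ) • n = -n from by module, inner_neg_right]
    have i2 : ⟪g, n - (2⁻¹:ℝ) • n⟫ = 2⁻¹ * ⟪g, n⟫ := by
      rw [show n - (2⁻¹:ℝ) • n = (2⁻¹:ℝ) • n from by module, real_inner_smul_right]
    rw [i1] at e1; rw [i2] at e2
    linarith
  have hsq : hh 0 * hh 0 + hh 1 * hh 1 = ‖hh‖ * ‖hh‖ := by
    have := real_inner_self_eq_norm_mul_norm hh
    rw [PiLp.inner_apply] at this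
    simp [Fin.sum_univ_two] at this; linear_combination this
  -- key computation: Z τ = perp g
  have hkey : toE ((Zmat γ k n).mulVec (toV (‖hh‖⁻¹ • hh))) = perp g := by
    have hn0' : n 0 = ‖hh‖⁻¹ * (-(hh 1)) := by simp [hn, perp, toE]
    have hn1' : n 1 = ‖hh‖⁻¹ * (hh 0) := by simp [hn, perp, toE]
    have hgam : γ n = g 0 * n 0 + g 1 * n 1 := by
      rw [heuler, PiLp.inner_apply]; simp [Fin.sum_univ_two]; ring
    ext i
    fin_cases i <;>
    · simp only [Zmat, toE, toV, perp, Matrix.mulVec, dotProduct,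
        Fin.sum_univ_two, Matrix.add_apply, Matrix.sub_apply, Matrix.smul_apply,
        Matrix.one_apply, Matrix.vecMulVec_apply, WithLp.equiv_symm_apply, PiLp.toLp_apply,
        PiLp.smul_apply, smul_eq_mul, Fin.mk_zero, Fin.mk_one]
      norm_num
      rw [hgam, hn0', hn1']
      simp only [← hg]
      have hinv : ‖hh‖⁻¹ * ‖hh‖⁻¹ * (hh 0 * hh 0 + hh 1 * hh 1) = 1 := by
        rw [hsq]; field_simp
      first
        | linear_combination g 1 * hinv
        | linear_combination (-(g 0)) * hinv
  rw [hkey]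
  -- transfer inner product through perp
  have hip : ⟪perp g, hh - h⟫ = ⟪g, (-perp hh) - (-perp h)⟫ := by
    rw [PiLp.inner_apply, PiLp.inner_apply]
    simp [Fin.sum_univ_two, perp, toE]
    ring
  rw [hip]
  -- convexity applied to n and m, scaled
  set m : E := ‖hh‖⁻¹ • (-perp h) with hm
  have hm0 : m ≠ 0 := smul_ne_zero (inv_ne_zero hnorm.ne') (perp_neg_ne_zero h hh0)
  have hc := hconv n m hn0 hm0
  have hcs := mul_le_mul_of_nonneg_left hc (le_of_lt hnorm)
  have e1 : ‖hh‖ • n = -perp hh := smul_inv_smul₀ hnorm.ne' _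
  have e2 : ‖hh‖ • m = -perp h := smul_inv_smul₀ hnorm.ne' _
  have g1 : ‖hh‖ * γ n = γ (-perp hh) := by rw [← hhom ‖hh‖ hnorm, e1]
  have g2 : ‖hh‖ * γ m = γ (-perp h) := by rw [← hhom ‖hh‖ hnorm, e2]
  have g3 : ‖hh‖ * ⟪g, n - m⟫ = ⟪g, (-perp hh) - (-perp h)⟫ := by
    rw [← real_inner_smul_right, smul_sub, e1, e2]
  calc γ (-perp hh) - γ (-perp h) = ‖hh‖ * (γ n - γ m) := by
        rw [mul_sub, g1, g2]
    _ ≤ ‖hh‖ * ⟪g, n - m⟫ := hcs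
    _ = _ := g3
end
end

section
/- Suppose γ: ℝ² → ℝ is C² away from 0, positively homogeneous of degree one, positive on 𝕊¹, and satisfies γ(−n) < 3γ(n) for all unit vectors n. Then there exists a function k: 𝕊¹ → ℝ such that for all nonzero h, ĥ ∈ ℝ², with n = −h^⊥/|h|, the stability inequality γ(−ĥ^⊥) − γ(−h^⊥) ≤ (Z_k(n) ĥ/|h|)·(ĥ − h) holds, where Z_k(n) = γ(n)I₂ − n∇γ(n)ᵀ − ∇γ(n)nᵀ + k(n)nnᵀ. -/
open scoped RealInnerProductSpace
noncomputable section
lemma toE_apply (v : Fin 2 → ℝ) (i : Fin 2) : toE v i = v i := rfl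
lemma perp_zero (p : E) : perp p 0 = p 1 := rfl
lemma perp_one (p : E) : perp p 1 = -(p 0) := rfl
lemma inner_E (p q : E) : ⟪p, q⟫ = p 0 * q 0 + p 1 * q 1 := by
  simp [PiLp.inner_apply, Fin.sum_univ_two]; ring
lemma smul_apply' (r : ℝ) (p : E) (i : Fin 2) : (r • p) i = r * p i := rfl
lemma neg_apply' (p : E) (i : Fin 2) : (-p) i = -(p i) := rfl
lemma sub_apply' (p q : E) (i : Fin 2) : (p - q) i = p i - q i := rfl
lemma add_apply' (p q : E) (i : Fin 2) : (p + q) i = p i + q i := rfl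
lemma E_ext {p q : E} (h0 : p 0 = q 0) (h1 : p 1 = q 1) : p = q := by
  ext i; fin_cases i <;> assumption
lemma norm_sq_E (p : E) : ‖p‖^2 = p 0 ^2 + p 1 ^2 := by
  rw [← real_inner_self_eq_norm_sq, inner_E]; ring
lemma norm_perp (p : E) : ‖perp p‖ = ‖p‖ := by
  have := norm_sq_E (perp p)
  rw [perp_zero, perp_one] at this
  have h2 := norm_sq_E p
  nlinarith [norm_nonneg p, norm_nonneg (perp p)]
lemma gradient_inner (f : E → ℝ) (x v : E) : ⟪gradient f x, v⟫ = fderiv ℝ f x v := by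
  rw [gradient]; exact InnerProductSpace.toDual_symm_apply

lemma quad_bound_of_deriv (f D : ℝ → ℝ) (δ₀ : ℝ) (hδ₀ : 0 < δ₀)
    (hf : ∀ y ∈ Set.Ioo (-δ₀) δ₀, HasDerivAt f (D y) y)
    (hD0 : D 0 = 0) (hDdiff : DifferentiableAt ℝ D 0) :
    ∃ δ > 0, ∃ C : ℝ, ∀ y : ℝ, |y| ≤ δ → f y ≤ f 0 + C * y ^ 2 := by
  set D' := deriv D 0 with hD'def
  have hD' : HasDerivAt D D' 0 := hDdiff.hasDerivAt
  have hlo := (hasDerivAt_iff_isLittleO.1 hD').bound one_pos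
  rw [Metric.eventually_nhds_iff] at hlo
  obtain ⟨ε, hε, hball⟩ := hlo
  set C : ℝ := 1 + |D'| with hCdef
  have hC1 : (1:ℝ) ≤ C := le_add_of_nonneg_right (abs_nonneg _)
  have hDbound : ∀ y : ℝ, |y| < ε → |D y| ≤ C * |y| := by
    intro y hy
    have h1 : dist y 0 < ε := by rwa [Real.dist_eq, sub_zero]
    have h2 := hball h1
    rw [hD0, sub_zero, sub_zero, smul_eq_mul, one_mul, Real.norm_eq_abs, Real.norm_eq_abs] at h2
    have h3 : |D y| ≤ |D y - y * D'| + |y * D'| := by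
      calc |D y| = |(D y - y * D') + y * D'| := by ring_nf
        _ ≤ |D y - y * D'| + |y * D'| := abs_add_le _ _
    rw [abs_mul] at h3
    calc |D y| ≤ |y| + |y| * |D'| := by linarith
      _ = C * |y| := by rw [hCdef]; ring
  set δ : ℝ := min (δ₀ / 2) (ε / 2) with hδdef
  have hδpos : 0 < δ := lt_min (by linarith) (by linarith)
  have hδδ₀ : δ ≤ δ₀ / 2 := min_le_left _ _
  have hδε : δ ≤ ε / 2 := min_le_right _ _
  refine ⟨δ, hδpos, C, fun y hy => ?_⟩
  have hyy := abs_le.1 hy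
  have hmem : ∀ z : ℝ, |z| ≤ δ → z ∈ Set.Ioo (-δ₀) δ₀ := by
    intro z hz; have := abs_le.1 hz
    exact ⟨by linarith, by linarith⟩
  rcases lt_trichotomy y 0 with hy0 | hy0 | hy0
  · have hcont : ContinuousOn f (Set.Icc y 0) := by
      intro z hz
      refine ((hf z (hmem z ?_)).continuousAt).continuousWithinAt
      rw [abs_le]; exact ⟨by linarith [hz.1], by linarith [hz.2]⟩
    obtain ⟨ξ, hξ, hslope⟩ := exists_hasDerivAt_eq_slope f D hy0 hcont
      (fun z hz => hf z (hmem z (by rw [abs_le]; exact ⟨by linarith [hz.1], by linarith [hz.2]⟩)))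
    have hay : |y| = -y := abs_of_neg hy0
    have hξy : |ξ| ≤ |y| := by
      rw [abs_le, hay]
      exact ⟨by linarith [hξ.1], by linarith [hξ.2]⟩
    have hξε : |ξ| < ε := by
      calc |ξ| ≤ |y| := hξy
        _ ≤ δ := hy
        _ < ε := by linarith
    have hDξ := hDbound ξ hξε
    have heq : f 0 - f y = D ξ * (0 - y) := by
      have hne : (0:ℝ) - y ≠ 0 := by linarith
      rw [eq_div_iff hne] at hslope
      linarith [hslope]
    have h1 : -(D ξ * (0 - y)) ≤ |D ξ| * |y| := by
      calc -(D ξ * (0 - y)) ≤ |D ξ * (0 - y)| := neg_le_abs _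
        _ = |D ξ| * |0 - y| := abs_mul _ _
        _ = |D ξ| * |y| := by rw [zero_sub, abs_neg]
    have h2 : |D ξ| * |y| ≤ C * |y| * |y| := by
      have := mul_le_mul_of_nonneg_right hDξ (abs_nonneg y)
      have h4 : C * |ξ| * |y| ≤ C * |y| * |y| := by
        have : |ξ| * |y| ≤ |y| * |y| := mul_le_mul_of_nonneg_right hξy (abs_nonneg y)
        nlinarith
      linarith
    have h5 : |y| * |y| = y ^ 2 := by rw [← abs_mul, abs_mul_self]; ring
    nlinarith
  · subst hy0; nlinarith
  · have hcont : ContinuousOn f (Set.Icc 0 y) := by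
      intro z hz
      refine ((hf z (hmem z ?_)).continuousAt).continuousWithinAt
      rw [abs_le]; exact ⟨by linarith [hz.1], by linarith [hz.2]⟩
    obtain ⟨ξ, hξ, hslope⟩ := exists_hasDerivAt_eq_slope f D hy0 hcont
      (fun z hz => hf z (hmem z (by rw [abs_le]; exact ⟨by linarith [hz.1], by linarith [hz.2]⟩)))
    have hay : |y| = y := abs_of_pos hy0
    have hξy : |ξ| ≤ |y| := by
      rw [abs_le, hay]
      exact ⟨by linarith [hξ.1], by linarith [hξ.2]⟩
    have hξε : |ξ| < ε := by
      calc |ξ| ≤ |y| := hξy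
        _ ≤ δ := hy
        _ < ε := by linarith
    have hDξ := hDbound ξ hξε
    have heq : f y - f 0 = D ξ * y := by
      have hne : y - (0:ℝ) ≠ 0 := by linarith
      rw [eq_div_iff hne] at hslope
      linarith [hslope]
    have h1 : D ξ * y ≤ |D ξ| * |y| := by
      calc D ξ * y ≤ |D ξ * y| := le_abs_self _
        _ = |D ξ| * |y| := abs_mul _ _
    have h2 : |D ξ| * |y| ≤ C * |y| * |y| := by
      have := mul_le_mul_of_nonneg_right hDξ (abs_nonneg y)
      have h4 : C * |ξ| * |y| ≤ C * |y| * |y| := by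
        have : |ξ| * |y| ≤ |y| * |y| := mul_le_mul_of_nonneg_right hξy (abs_nonneg y)
        nlinarith
      linarith
    have h5 : |y| * |y| = y ^ 2 := by rw [← abs_mul, abs_mul_self]; ring
    nlinarith

lemma euler_id (γ : E → ℝ) (hsmooth : ∀ p : E, p ≠ 0 → ContDiffAt ℝ 2 γ p)
    (hhom : ∀ l : ℝ, 0 < l → ∀ p : E, γ (l • p) = l * γ p)
    (n : E) (hn : n ≠ 0) : fderiv ℝ γ n n = γ n := by
  have hdiff : DifferentiableAt ℝ γ n := (hsmooth n hn).differentiableAt (by norm_num)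
  have hline : HasDerivAt (fun l : ℝ => l • n) ((1:ℝ) • n) 1 := (hasDerivAt_id 1).smul_const n
  have hcomp : HasDerivAt (fun l : ℝ => γ (l • n)) (fderiv ℝ γ n n) 1 := by
    have h1 : HasFDerivAt γ (fderiv ℝ γ n) ((1:ℝ) • n) := by
      rw [one_smul]; exact hdiff.hasFDerivAt
    have := h1.comp_hasDerivAt 1 hline
    rw [one_smul] at this; exact this
  have heq : (fun l : ℝ => γ (l • n)) =ᶠ[nhds 1] fun l : ℝ => l * γ n := by
    filter_upwards [lt_mem_nhds (zero_lt_one)] with l hl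
    exact hhom l hl n
  have h2 : HasDerivAt (fun l : ℝ => γ (l • n)) (γ n) 1 := by
    have h3 : HasDerivAt (fun l : ℝ => l * γ n) (γ n) 1 := by
      simpa using (hasDerivAt_id (1:ℝ)).mul_const (γ n)
    exact h3.congr_of_eventuallyEq heq
  exact hcomp.unique h2


lemma sphere_bound (γ : E → ℝ) (hsmooth : ∀ p : E, p ≠ 0 → ContDiffAt ℝ 2 γ p) :
    ∃ L : ℝ, 0 ≤ L ∧ ∀ p : E, ‖p‖ = 1 → γ p ≤ L := by
  have hcomp : IsCompact (Metric.sphere (0:E) 1) := isCompact_sphere 0 1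
  have hne : (Metric.sphere (0:E) 1).Nonempty := by
    refine ⟨EuclideanSpace.single 0 1, ?_⟩
    simp [EuclideanSpace.norm_single]
  have hcont : ContinuousOn γ (Metric.sphere (0:E) 1) := by
    intro p hp
    have hp1 : ‖p‖ = 1 := by simpa [mem_sphere_iff_norm] using hp
    have : p ≠ 0 := by intro h; rw [h] at hp1; simp at hp1
    exact ((hsmooth p this).continuousAt).continuousWithinAt
  obtain ⟨x, hx, hmax⟩ := hcomp.exists_isMaxOn hne hcont
  refine ⟨max (γ x) 0, le_max_right _ _, fun p hp => ?_⟩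
  have : p ∈ Metric.sphere (0:E) 1 := by simpa [mem_sphere_iff_norm] using hp
  exact (hmax this).trans (le_max_left _ _)

lemma region3 (γ : E → ℝ) (hsmooth : ∀ p : E, p ≠ 0 → ContDiffAt ℝ 2 γ p)
    (n t : E) (hunit : ∀ x y : ℝ, x ^ 2 + y ^ 2 = 1 → ‖x • n - y • t‖ = 1)
    (c s : ℝ) (hc : γ n = c) (hs : fderiv ℝ γ n t = s) :
    ∃ δ > 0, ∃ C : ℝ, ∀ y : ℝ, |y| ≤ δ →
      (γ (Real.sqrt (1 - y ^ 2) • n - y • t) + c * Real.sqrt (1 - y ^ 2) - s * y) ^ 2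
        - 4 * c ^ 2 * ((Real.sqrt (1 - y ^ 2)) ^ 2 - y ^ 2)
        + 8 * c * s * (Real.sqrt (1 - y ^ 2) * y) ≤ C * y ^ 2 := by
  set x : ℝ → ℝ := fun y => Real.sqrt (1 - y ^ 2) with hxdef
  set v : ℝ → E := fun y => x y • n - y • t with hvdef
  set f : ℝ → ℝ := fun y =>
    (γ (v y) + c * x y - s * y) ^ 2 - 4 * c ^ 2 * ((x y) ^ 2 - y ^ 2)
      + 8 * c * s * (x y * y) with hfdef
  -- basic facts on Ioo (-1/2) (1/2)
  have hIoo : ∀ y ∈ Set.Ioo (-(1/2) : ℝ) (1/2), (0:ℝ) < 1 - y ^ 2 := by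
    intro y hy; obtain ⟨h1, h2⟩ := hy; nlinarith
  have hxpos : ∀ y ∈ Set.Ioo (-(1/2) : ℝ) (1/2), 0 < x y := by
    intro y hy; exact Real.sqrt_pos.2 (hIoo y hy)
  have hxsq : ∀ y ∈ Set.Ioo (-(1/2) : ℝ) (1/2), (x y) ^ 2 = 1 - y ^ 2 := by
    intro y hy; exact Real.sq_sqrt (hIoo y hy).le
  have hvnorm : ∀ y ∈ Set.Ioo (-(1/2) : ℝ) (1/2), ‖v y‖ = 1 := by
    intro y hy
    exact hunit (x y) y (by rw [hxsq y hy]; ring)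
  have hvne : ∀ y ∈ Set.Ioo (-(1/2) : ℝ) (1/2), v y ≠ 0 := by
    intro y hy h0
    have := hvnorm y hy; rw [h0] at this; simp at this
  -- derivatives
  have hxD : ∀ y ∈ Set.Ioo (-(1/2) : ℝ) (1/2), HasDerivAt x (-y / x y) y := by
    intro y hy
    have h1 : HasDerivAt (fun y : ℝ => 1 - y ^ 2) (-(2 * y ^ 1)) y := by
      simpa using (HasDerivAt.const_sub 1 (hasDerivAt_pow 2 y))
    have h2 : (1 : ℝ) - y ^ 2 ≠ 0 := (hIoo y hy).ne'
    have h3 := (Real.hasDerivAt_sqrt h2).comp y h1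
    refine h3.congr_deriv ?_
    have hxne : x y ≠ 0 := (hxpos y hy).ne'
    rw [hxdef]
    field_simp
  have hvD : ∀ y ∈ Set.Ioo (-(1/2) : ℝ) (1/2), HasDerivAt v ((-y / x y) • n - t) y := by
    intro y hy
    have h1 := (hxD y hy).smul_const n
    have h2 : HasDerivAt (fun y : ℝ => y • t) ((1:ℝ) • t) y := (hasDerivAt_id y).smul_const t
    have := h1.sub h2
    rwa [one_smul] at this
  have hγD : ∀ y ∈ Set.Ioo (-(1/2) : ℝ) (1/2),
      HasDerivAt (fun y => γ (v y)) ((fderiv ℝ γ (v y)) ((-y / x y) • n - t)) y := by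
    intro y hy
    have hdiff : DifferentiableAt ℝ γ (v y) :=
      ((hsmooth (v y) (hvne y hy)).differentiableAt (by norm_num))
    exact hdiff.hasFDerivAt.comp_hasDerivAt y (hvD y hy)
  -- the derivative function
  set D : ℝ → ℝ := fun y =>
    2 * (γ (v y) + c * x y - s * y) *
      ((fderiv ℝ γ (v y)) ((-y / x y) • n - t) + c * (-y / x y) - s)
    - 4 * c ^ 2 * (2 * x y * (-y / x y) - 2 * y)
    + 8 * c * s * ((-y / x y) * y + x y) with hDdef
  have hfD : ∀ y ∈ Set.Ioo (-(1/2) : ℝ) (1/2), HasDerivAt f (D y) y := by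
    intro y hy
    have hinner : HasDerivAt (fun y => γ (v y) + c * x y - s * y)
        ((fderiv ℝ γ (v y)) ((-y / x y) • n - t) + c * (-y / x y) - s) y := by
      have h1 := (hγD y hy).add ((hxD y hy).const_mul c)
      have h2 : HasDerivAt (fun y : ℝ => s * y) s y := by
        simpa using (hasDerivAt_id y).const_mul s
      exact h1.sub h2
    have hsq := hinner.pow 2
    have hq : HasDerivAt (fun y => 4 * c ^ 2 * ((x y) ^ 2 - y ^ 2))
        (4 * c ^ 2 * (2 * x y * (-y / x y) - 2 * y)) y := by
      have h1 := (hxD y hy).pow 2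
      have h2 : HasDerivAt (fun y : ℝ => y ^ 2) (2 * y) y := by
        simpa using hasDerivAt_pow 2 y
      have h3 := h1.sub h2
      have h4 := h3.const_mul (4 * c ^ 2)
      refine h4.congr_deriv ?_
      ring
    have hlast : HasDerivAt (fun y => 8 * c * s * (x y * y))
        (8 * c * s * ((-y / x y) * y + x y)) y := by
      have h1 := (hxD y hy).mul (hasDerivAt_id y)
      have h2 := h1.const_mul (8 * c * s)
      refine h2.congr_deriv ?_
      simp only [id_eq]
      ring
    have := (hsq.sub hq).add hlast
    refine this.congr_deriv ?_
    ring
  -- D 0 = 0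
  have hx0 : x 0 = 1 := by rw [hxdef]; simp
  have hv0 : v 0 = n := by rw [hvdef]; simp [hx0]
  have hD0 : D 0 = 0 := by
    rw [hDdef]
    simp only [hv0, hx0, hc]
    have h1 : ((0:ℝ) / 1) = 0 := by norm_num
    have h2 : (fderiv ℝ γ n) ((-(0:ℝ) / 1) • n - t) = -s := by
      have : (-(0:ℝ) / 1) • n - t = -t := by norm_num
      rw [this, map_neg, hs]
    rw [h2]
    ring_nf
  -- D differentiable at 0
  have h0mem : (0:ℝ) ∈ Set.Ioo (-(1/2) : ℝ) (1/2) := by norm_num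
  have hxdiff : DifferentiableAt ℝ x 0 := (hxD 0 h0mem).differentiableAt
  have hqdiff : DifferentiableAt ℝ (fun y : ℝ => -y / x y) 0 := by
    apply DifferentiableAt.div
    · exact (differentiable_id.neg).differentiableAt
    · exact hxdiff
    · rw [hx0]; norm_num
  have hvdiff : DifferentiableAt ℝ v 0 := (hvD 0 h0mem).differentiableAt
  have hγvdiff : DifferentiableAt ℝ (fun y => γ (v y)) 0 := (hγD 0 h0mem).differentiableAt
  have hfdvdiff : DifferentiableAt ℝ (fun y => fderiv ℝ γ (v y)) 0 := by
    have h1 : ContDiffAt ℝ 1 (fderiv ℝ γ) n := by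
      have := (hsmooth n (by rw [← hv0]; exact hvne 0 h0mem)).fderiv_right
        (m := 1) (by norm_num)
      exact this
    have h2 : DifferentiableAt ℝ (fderiv ℝ γ) (v 0) := by
      rw [hv0]; exact h1.differentiableAt (by norm_num)
    exact h2.comp 0 hvdiff
  have hwdiff : DifferentiableAt ℝ (fun y : ℝ => (-y / x y) • n - t) 0 := by
    apply DifferentiableAt.sub
    · exact hqdiff.smul_const n
    · exact differentiableAt_const t
  have happdiff : DifferentiableAt ℝ (fun y => (fderiv ℝ γ (v y)) ((-y / x y) • n - t)) 0 :=
    hfdvdiff.clm_apply hwdiff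
  have hDdiff : DifferentiableAt ℝ D 0 := by
    rw [hDdef]
    apply DifferentiableAt.add
    apply DifferentiableAt.sub
    · apply DifferentiableAt.mul
      · apply DifferentiableAt.const_mul
        exact (hγvdiff.add (hxdiff.const_mul c)).sub ((differentiable_id.differentiableAt).const_mul s)
      · exact (happdiff.add (hqdiff.const_mul c)).sub (differentiableAt_const s)
    · apply DifferentiableAt.const_mul
      apply DifferentiableAt.sub
      · exact (hxdiff.const_mul 2).mul hqdiff
      · exact (differentiable_id.differentiableAt).const_mul 2
    · apply DifferentiableAt.const_mul
      exact (hqdiff.mul (differentiable_id.differentiableAt)).add hxdiff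
  -- apply the abstract lemma
  obtain ⟨δ, hδpos, C, hC⟩ := quad_bound_of_deriv f D (1/2) (by norm_num) hfD hD0 hDdiff
  have hf0 : f 0 = 0 := by
    rw [hfdef]
    simp only [hv0, hx0, hc]
    ring
  refine ⟨δ, hδpos, C, fun y hy => ?_⟩
  have := hC y hy
  rw [hf0] at this
  simpa using this

lemma unit_comb (n : E) (hn : ‖n‖ = 1) :
    ∀ x y : ℝ, x ^ 2 + y ^ 2 = 1 → ‖x • n - y • perp n‖ = 1 := by
  intro x y hxy
  have hn2 : n 0 ^ 2 + n 1 ^ 2 = 1 := by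
    have := norm_sq_E n; rw [hn] at this; linarith [this]
  have h0 : (x • n - y • perp n) 0 = x * n 0 - y * n 1 := rfl
  have h1 : (x • n - y • perp n) 1 = x * n 1 + y * n 0 := by
    show x * n 1 - y * (-(n 0)) = _; ring
  have hsq := norm_sq_E (x • n - y • perp n)
  rw [h0, h1] at hsq
  have : ‖x • n - y • perp n‖ ^ 2 = 1 := by rw [hsq]; nlinarith
  nlinarith [norm_nonneg (x • n - y • perp n)]


set_option maxHeartbeats 1000000 in
/-- the key one-direction estimate -/
lemma keyA (γ : E → ℝ)
    (hsmooth : ∀ p : E, p ≠ 0 → ContDiffAt ℝ 2 γ p)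
    (hhom : ∀ l : ℝ, 0 < l → ∀ p : E, γ (l • p) = l * γ p)
    (hpos : ∀ p : E, p ≠ 0 → 0 < γ p)
    (hcond : ∀ n : E, ‖n‖ = 1 → γ (-n) < 3 * γ n)
    (n : E) (hn : ‖n‖ = 1) :
    ∃ k : ℝ, ∀ a b : ℝ, ¬(a = 0 ∧ b = 0) →
      γ (a • n - b • perp n) ≤ γ n * (1 + a ^ 2 - a - b ^ 2)
        - 2 * a * b * (fderiv ℝ γ n (perp n)) + b * (fderiv ℝ γ n (perp n)) + k * b ^ 2 := by
  set t : E := perp n with htdef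
  set c : ℝ := γ n with hcdef
  set s : ℝ := fderiv ℝ γ n t with hsdef
  have hn0 : n ≠ 0 := fun h => by rw [h] at hn; simp at hn
  have hc : 0 < c := hpos n hn0
  have hunit := unit_comb n hn
  obtain ⟨L, hL0, hL⟩ := sphere_bound γ hsmooth
  obtain ⟨δ₃, hδ₃, C₃, hC₃⟩ := region3 γ hsmooth n t hunit c s rfl rfl
  -- region 2 : near (-1, 0)
  have hψ₂ : ∃ δ₂ > 0, ∀ y : ℝ, |y| ≤ δ₂ →
      (γ ((-Real.sqrt (1 - y ^ 2)) • n - y • t) + c * (-Real.sqrt (1 - y ^ 2)) - s * y) ^ 2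
        - 4 * c ^ 2 * ((-Real.sqrt (1 - y ^ 2)) ^ 2 - y ^ 2)
        + 8 * c * s * ((-Real.sqrt (1 - y ^ 2)) * y) < 0 := by
    set ψ : ℝ → ℝ := fun y =>
      (γ ((-Real.sqrt (1 - y ^ 2)) • n - y • t) + c * (-Real.sqrt (1 - y ^ 2)) - s * y) ^ 2
        - 4 * c ^ 2 * ((-Real.sqrt (1 - y ^ 2)) ^ 2 - y ^ 2)
        + 8 * c * s * ((-Real.sqrt (1 - y ^ 2)) * y) with hψdef
    have hval : ψ 0 < 0 := by
      have h1 : Real.sqrt (1 - (0:ℝ) ^ 2) = 1 := by norm_num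
      have h2 : ((-Real.sqrt (1 - (0:ℝ) ^ 2)) • n - (0:ℝ) • t) = -n := by
        rw [h1]; simp
      have h3 : ψ 0 = (γ (-n) - c) ^ 2 - 4 * c ^ 2 := by
        have he : ψ 0 = (γ ((-Real.sqrt (1 - (0:ℝ) ^ 2)) • n - (0:ℝ) • t)
            + c * (-Real.sqrt (1 - (0:ℝ) ^ 2)) - s * 0) ^ 2
            - 4 * c ^ 2 * ((-Real.sqrt (1 - (0:ℝ) ^ 2)) ^ 2 - (0:ℝ) ^ 2)
            + 8 * c * s * ((-Real.sqrt (1 - (0:ℝ) ^ 2)) * 0) := rfl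
        rw [he, h2, h1]; ring
      have h4 := hcond n hn
      have h5 : 0 < γ (-n) := hpos (-n) (by simpa using hn0)
      rw [h3]; rw [← hcdef] at h4; nlinarith
    have hcont : ContinuousAt ψ 0 := by
      have hmap : ContinuousAt (fun y : ℝ => (-Real.sqrt (1 - y ^ 2)) • n - y • t) 0 := by
        apply ContinuousAt.sub
        · refine ContinuousAt.smul (f := fun y : ℝ => -Real.sqrt (1 - y ^ 2)) (g := fun _ : ℝ => n) ?_ continuousAt_const
          apply ContinuousAt.neg
          exact (Real.continuous_sqrt.continuousAt).comp
            (by fun_prop : ContinuousAt (fun y : ℝ => 1 - y ^ 2) 0)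
        · exact (continuousAt_id).smul continuousAt_const
      have hγcont : ContinuousAt γ ((-Real.sqrt (1 - (0:ℝ) ^ 2)) • n - (0:ℝ) • t) := by
        have h1 : Real.sqrt (1 - (0:ℝ) ^ 2) = 1 := by norm_num
        have h2 : ((-Real.sqrt (1 - (0:ℝ) ^ 2)) • n - (0:ℝ) • t) = -n := by rw [h1]; simp
        rw [h2]
        exact (hsmooth (-n) (by simpa using hn0)).continuousAt
      have hco : ContinuousAt (fun y : ℝ => γ ((-Real.sqrt (1 - y ^ 2)) • n - y • t)) 0 :=
        ContinuousAt.comp (g := γ)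
          (f := fun y : ℝ => (-Real.sqrt (1 - y ^ 2)) • n - y • t) (x := (0:ℝ)) hγcont hmap
      have hsq : ContinuousAt (fun y : ℝ => Real.sqrt (1 - y ^ 2)) 0 :=
        (Real.continuous_sqrt.continuousAt).comp
          (by fun_prop : ContinuousAt (fun y : ℝ => 1 - y ^ 2) 0)
      rw [hψdef]
      exact ((((hco.add (continuousAt_const.mul hsq.neg)).sub
          (continuousAt_const.mul continuousAt_id)).pow 2).sub
          (continuousAt_const.mul ((hsq.neg.pow 2).sub (continuousAt_id.pow 2)))).add
          (continuousAt_const.mul (hsq.neg.mul continuousAt_id))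
    have hev : ∀ᶠ y in nhds (0:ℝ), ψ y < 0 := by
      have : Set.Iio (0:ℝ) ∈ nhds (ψ 0) := Iio_mem_nhds hval
      exact hcont.eventually_mem this
    rw [Metric.eventually_nhds_iff] at hev
    obtain ⟨ε, hε, hb⟩ := hev
    refine ⟨ε / 2, by linarith, fun y hy => ?_⟩
    apply hb
    rw [Real.dist_eq, sub_zero]
    calc |y| ≤ ε / 2 := hy
      _ < ε := by linarith
  obtain ⟨δ₂, hδ₂, hψ₂⟩ := hψ₂
  -- global constant
  set η : ℝ := min δ₃ δ₂ with hηdef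
  have hη : 0 < η := lt_min hδ₃ hδ₂
  set M : ℝ := (L + c + |s|) ^ 2 + 4 * c ^ 2 + 8 * c * |s| with hMdef
  set k : ℝ := max 0 (max (C₃ / (4 * c)) (M / (4 * c * η ^ 2))) with hkdef
  have hk0 : 0 ≤ k := le_max_left _ _
  have hkC₃ : C₃ ≤ 4 * c * k := by
    have h1 : C₃ / (4 * c) ≤ k := le_trans (le_max_left _ _) (le_max_right _ _)
    calc C₃ = 4 * c * (C₃ / (4 * c)) := by field_simp
      _ ≤ 4 * c * k := mul_le_mul_of_nonneg_left h1 (by positivity)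
  have hkM : M ≤ 4 * c * k * η ^ 2 := by
    have h1 : M / (4 * c * η ^ 2) ≤ k := le_trans (le_max_right _ _) (le_max_right _ _)
    have h2 : 0 < 4 * c * η ^ 2 := by positivity
    calc M = 4 * c * η ^ 2 * (M / (4 * c * η ^ 2)) := by field_simp
      _ ≤ 4 * c * η ^ 2 * k := mul_le_mul_of_nonneg_left h1 (by positivity)
      _ = 4 * c * k * η ^ 2 := by ring
  -- the circle estimate (star)
  have hstar : ∀ x y : ℝ, x ^ 2 + y ^ 2 = 1 →
      (γ (x • n - y • t) + c * x - s * y) ^ 2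
        ≤ 4 * c * (c * (x ^ 2 - y ^ 2) - 2 * s * (x * y) + k * y ^ 2) := by
    intro x y hxy
    have hy1 : y ^ 2 ≤ 1 := by nlinarith
    have hx1 : x ^ 2 ≤ 1 := by nlinarith
    rcases le_or_gt (|y|) η with hyη | hyη
    · rcases le_or_gt 0 x with hx0 | hx0
      · -- x ≥ 0 : region 3
        have hxeq : Real.sqrt (1 - y ^ 2) = x := by
          rw [show (1:ℝ) - y ^ 2 = x ^ 2 by linarith]
          exact Real.sqrt_sq hx0
        have := hC₃ y (le_trans hyη (min_le_left _ _))
        rw [hxeq] at this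
        rw [show 4 * c * (c * (x ^ 2 - y ^ 2) - 2 * s * (x * y) + k * y ^ 2)
          = 4 * c ^ 2 * (x ^ 2 - y ^ 2) - 8 * c * s * (x * y) + 4 * c * k * y ^ 2 from by ring]
        linarith [this, mul_le_mul_of_nonneg_right hkC₃ (sq_nonneg y)]
      · -- x < 0 : region 2
        have hxeq : Real.sqrt (1 - y ^ 2) = -x := by
          rw [show (1:ℝ) - y ^ 2 = x ^ 2 by linarith]
          rw [show x ^ 2 = (-x) ^ 2 by ring]
          exact Real.sqrt_sq (by linarith)
        have := hψ₂ y (le_trans hyη (min_le_right _ _))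
        rw [hxeq] at this
        simp only [neg_neg] at this
        have h3 : 0 ≤ 4 * c * k * y ^ 2 := by positivity
        rw [show 4 * c * (c * (x ^ 2 - y ^ 2) - 2 * s * (x * y) + k * y ^ 2)
          = 4 * c ^ 2 * (x ^ 2 - y ^ 2) - 8 * c * s * (x * y) + 4 * c * k * y ^ 2 from by ring]
        linarith [this, h3]
    · -- |y| ≥ η
      have hyy : η ^ 2 ≤ y ^ 2 := by nlinarith [abs_nonneg y, sq_abs y]
      have hγpos : 0 < γ (x • n - y • t) := by
        apply hpos
        intro h0
        have := hunit x y hxy; rw [h0] at this; simp at this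
      have hγle : γ (x • n - y • t) ≤ L := hL _ (hunit x y hxy)
      have hxa : |x| ≤ 1 := by nlinarith [sq_abs x, abs_nonneg x]
      have hya : |y| ≤ 1 := by nlinarith [sq_abs y, abs_nonneg y]
      have hB : (γ (x • n - y • t) + c * x - s * y) ^ 2 ≤ (L + c + |s|) ^ 2 := by
        have h1 : γ (x • n - y • t) + c * x - s * y ≤ L + c + |s| := by
          have hcx : c * x ≤ c := by nlinarith [abs_le.1 hxa]
          have hsy : -(s * y) ≤ |s| := by
            calc -(s * y) ≤ |s * y| := neg_le_abs _
              _ = |s| * |y| := abs_mul _ _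
              _ ≤ |s| * 1 := by nlinarith [abs_nonneg s]
              _ = |s| := by ring
          linarith
        have h2 : -(L + c + |s|) ≤ γ (x • n - y • t) + c * x - s * y := by
          have hcx : -c ≤ c * x := by nlinarith [abs_le.1 hxa]
          have hsy : -(|s|) ≤ -(s * y) := by
            have : s * y ≤ |s * y| := le_abs_self _
            have h3 : |s * y| ≤ |s| := by
              rw [abs_mul]; nlinarith [abs_nonneg s]
            linarith
          linarith
        nlinarith
      have hxy1 : |x * y| ≤ 1 := by
        rw [abs_mul]; nlinarith [abs_nonneg x, abs_nonneg y]
      have h8 : 8 * c * s * (x * y) ≤ 8 * c * |s| := by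
        have h1 : s * (x * y) ≤ |s| * |x * y| := by
          rw [← abs_mul]; exact le_abs_self _
        have h2 : |s| * |x * y| ≤ |s| * 1 := by
          apply mul_le_mul_of_nonneg_left hxy1 (abs_nonneg s)
        nlinarith [h1, h2]
      have h4 : -(4 * c ^ 2) ≤ 4 * c ^ 2 * (x ^ 2 - y ^ 2) := by nlinarith
      have hM4 : M ≤ 4 * c * k * y ^ 2 := by
        calc M ≤ 4 * c * k * η ^ 2 := hkM
          _ ≤ 4 * c * k * y ^ 2 := mul_le_mul_of_nonneg_left hyy (by positivity)
      rw [show 4 * c * (c * (x ^ 2 - y ^ 2) - 2 * s * (x * y) + k * y ^ 2)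
        = 4 * c ^ 2 * (x ^ 2 - y ^ 2) - 8 * c * s * (x * y) + 4 * c * k * y ^ 2 from by ring]
      linarith [hB, h4, h8, hM4]
  -- conclusion via polar coordinates
  refine ⟨k, ?_⟩
  intro a b hab
  have hab2 : 0 < a ^ 2 + b ^ 2 := by
    rcases Classical.em (a = 0) with ha | ha
    · have hb : b ≠ 0 := fun hb => hab ⟨ha, hb⟩
      nlinarith [sq_nonneg a, sq_nonneg b, pow_pos (abs_pos.2 hb) 2, sq_abs b]
    · nlinarith [sq_nonneg b, pow_pos (abs_pos.2 ha) 2, sq_abs a]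
  set ρ : ℝ := Real.sqrt (a ^ 2 + b ^ 2) with hρdef
  have hρ : 0 < ρ := Real.sqrt_pos.2 hab2
  have hρsq : ρ ^ 2 = a ^ 2 + b ^ 2 := Real.sq_sqrt hab2.le
  set x : ℝ := a / ρ with hxdef
  set y : ℝ := b / ρ with hydef
  have hxy : x ^ 2 + y ^ 2 = 1 := by
    rw [hxdef, hydef]; field_simp; linarith [hρsq]
  have ha : a = ρ * x := by rw [hxdef]; field_simp
  have hb : b = ρ * y := by rw [hydef]; field_simp
  have hhomog : γ (a • n - b • t) = ρ * γ (x • n - y • t) := by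
    have h1 : a • n - b • t = ρ • (x • n - y • t) := by
      rw [smul_sub, smul_smul, smul_smul, ha, hb]
    rw [h1, hhom ρ hρ]
  have hB2 := hstar x y hxy
  set B : ℝ := γ (x • n - y • t) + c * x - s * y with hBdef
  have hγxy : γ (x • n - y • t) = B - c * x + s * y := by rw [hBdef]; ring
  rw [hhomog, hγxy, ha, hb]
  have h1 : 4 * c * (ρ * B) ≤ 4 * c * (c + ρ ^ 2 * (c * (x ^ 2 - y ^ 2) - 2 * s * (x * y) + k * y ^ 2)) := by
    nlinarith [sq_nonneg (B * ρ - 2 * c), mul_le_mul_of_nonneg_right hB2 (sq_nonneg ρ)]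
  have hmain : ρ * B ≤ c + ρ ^ 2 * (c * (x ^ 2 - y ^ 2) - 2 * s * (x * y) + k * y ^ 2) :=
    (mul_le_mul_iff_right₀ (show (0:ℝ) < 4 * c by positivity)).1 h1
  linarith [hmain]

lemma Zmat_entry (γ : E → ℝ) (k : ℝ) (n : E) (i j : Fin 2) :
    Zmat γ k n i j = γ n * (if i = j then 1 else 0)
      - n i * gradient γ n j - gradient γ n i * n j + k * (n i * n j) := by
  simp [Zmat, Matrix.add_apply, Matrix.sub_apply, Matrix.smul_apply, Matrix.vecMulVec_apply,
    Matrix.one_apply, toV, smul_eq_mul, mul_comm]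

lemma Z_inner (γ : E → ℝ) (κ : ℝ) (n w d : E) :
    ⟪toE ((Zmat γ κ n).mulVec (toV w)), d⟫
      = γ n * ⟪w, d⟫ - ⟪gradient γ n, w⟫ * ⟪n, d⟫ - ⟪n, w⟫ * ⟪gradient γ n, d⟫
        + κ * ⟪n, w⟫ * ⟪n, d⟫ := by
  have h0 : (toE ((Zmat γ κ n).mulVec (toV w))) 0
      = Zmat γ κ n 0 0 * w 0 + Zmat γ κ n 0 1 * w 1 := by
    show ((Zmat γ κ n).mulVec (toV w)) 0 = _
    simp [Matrix.mulVec, dotProduct, Fin.sum_univ_two, toV]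
  have h1 : (toE ((Zmat γ κ n).mulVec (toV w))) 1
      = Zmat γ κ n 1 0 * w 0 + Zmat γ κ n 1 1 * w 1 := by
    show ((Zmat γ κ n).mulVec (toV w)) 1 = _
    simp [Matrix.mulVec, dotProduct, Fin.sum_univ_two, toV]
  rw [inner_E, h0, h1, Zmat_entry, Zmat_entry, Zmat_entry, Zmat_entry]
  rw [inner_E, inner_E, inner_E, inner_E, inner_E]
  norm_num
  ring

lemma perp_perp (p : E) : perp (perp p) = -p := by
  refine E_ext ?_ ?_
  · show perp p 1 = -(p 0); rfl
  · show -(perp p 0) = -(p 1); rfl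

lemma perp_smul (c : ℝ) (p : E) : perp (c • p) = c • perp p := by
  refine E_ext ?_ ?_
  · show (c • p) 1 = c * perp p 0; rfl
  · show -((c • p) 0) = c * perp p 1
    show -(c * p 0) = c * (-(p 0)); ring

lemma perp_add (p q : E) : perp (p + q) = perp p + perp q := by
  refine E_ext ?_ ?_
  · show (p + q) 1 = perp p 0 + perp q 0; rfl
  · show -((p + q) 0) = perp p 1 + perp q 1
    show -(p 0 + q 0) = -(p 0) + -(q 0); ring

lemma perp_neg (p : E) : perp (-p) = -perp p := by
  refine E_ext ?_ ?_
  · show (-p) 1 = -(perp p 0); rfl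
  · show -((-p) 0) = -(perp p 1)
    show -(-(p 0)) = -(-(p 0)); rfl


set_option maxHeartbeats 1000000 in
/-- Main stability lemma: existence of a stabilizing function k. -/
theorem stability_lemma (γ : E → ℝ)
    (hsmooth : ∀ p : E, p ≠ 0 → ContDiffAt ℝ 2 γ p)
    (hhom : ∀ l : ℝ, 0 < l → ∀ p : E, γ (l • p) = l * γ p)
    (hpos : ∀ p : E, p ≠ 0 → 0 < γ p)
    (hcond : ∀ n : E, ‖n‖ = 1 → γ (-n) < 3 * γ n) :
    ∃ k : E → ℝ, ∀ h hh : E, h ≠ 0 → hh ≠ 0 →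
      γ (-perp hh) - γ (-perp h)
        ≤ ⟪toE ((Zmat γ (k (‖h‖⁻¹ • (-perp h))) (‖h‖⁻¹ • (-perp h))).mulVec
            (toV (‖h‖⁻¹ • hh))), hh - h⟫ := by
  classical
  set K : E → ℝ := fun p =>
    if hp : ‖p‖ = 1 then (keyA γ hsmooth hhom hpos hcond p hp).choose else 0 with hKdef
  have hkey : ∀ p : E, (hp : ‖p‖ = 1) → ∀ a b : ℝ, ¬(a = 0 ∧ b = 0) →
      γ (a • p - b • perp p) ≤ γ p * (1 + a ^ 2 - a - b ^ 2)
        - 2 * a * b * (fderiv ℝ γ p (perp p)) + b * (fderiv ℝ γ p (perp p)) + K p * b ^ 2 := by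
    intro p hp a b hab
    have h1 := (keyA γ hsmooth hhom hpos hcond p hp).choose_spec a b hab
    simp only [hKdef]
    rwa [dif_pos hp]
  refine ⟨K, ?_⟩
  intro h hh hne hhne
  set r : ℝ := ‖h‖ with hrdef
  have hr : 0 < r := norm_pos_iff.2 hne
  have hrne : r ≠ 0 := hr.ne'
  set n : E := r⁻¹ • (-perp h) with hndef
  have hnormph : ‖-perp h‖ = r := by rw [norm_neg, norm_perp]
  have hn : ‖n‖ = 1 := by
    rw [hndef, norm_smul, hnormph, norm_inv, Real.norm_eq_abs, abs_of_pos hr,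
      inv_mul_cancel₀ hrne]
  have hn0 : n ≠ 0 := fun h0 => by rw [h0] at hn; simp at hn
  set t : E := perp n with htdef
  have hnt : ‖t‖ = 1 := by rw [htdef, norm_perp, hn]
  have ht : t = r⁻¹ • h := by
    rw [htdef, hndef, perp_smul, perp_neg, perp_perp, neg_neg]
  have hht : h = r • t := by
    rw [ht, smul_smul, mul_inv_cancel₀ hrne, one_smul]
  have hperph : -perp h = r • n := by
    rw [hndef, smul_smul, mul_inv_cancel₀ hrne, one_smul]
  have htt : ⟪t, t⟫ = 1 := by
    have h1 := real_inner_self_eq_norm_sq t; rw [hnt] at h1; simpa using h1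
  have hnn : ⟪n, n⟫ = 1 := by
    have h1 := real_inner_self_eq_norm_sq n; rw [hn] at h1; simpa using h1
  have hntinner : ⟪n, t⟫ = 0 := by
    rw [inner_E, htdef, perp_zero, perp_one]; ring
  have htninner : ⟪t, n⟫ = 0 := by rw [real_inner_comm]; exact hntinner
  set g : E := gradient γ n with hgdef
  set c : ℝ := γ n with hcdef
  set s : ℝ := ⟪g, t⟫ with hsdef
  have hgn : ⟪g, n⟫ = c := by
    rw [hgdef, gradient_inner, euler_id γ hsmooth hhom n hn0]
  have hst : s = fderiv ℝ γ n t := by rw [hsdef, hgdef, gradient_inner]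
  set a : ℝ := ⟪hh, t⟫ with hadef
  set b : ℝ := ⟪hh, n⟫ with hbdef
  have hr2 : h 0 ^ 2 + h 1 ^ 2 = r ^ 2 := (norm_sq_E h).symm
  have hdecomp : hh = a • t + b • n := by
    have hn0c : n 0 = r⁻¹ * (-(h 1)) := by
      show r⁻¹ * ((-perp h) 0) = _
      have h1 : (-perp h) 0 = -(h 1) := by show -(perp h 0) = _; rw [perp_zero]
      rw [h1]
    have hn1c : n 1 = r⁻¹ * (h 0) := by
      show r⁻¹ * ((-perp h) 1) = _
      have h1 : (-perp h) 1 = h 0 := by show -(perp h 1) = _; rw [perp_one]; ring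
      rw [h1]
    have ht0c : t 0 = r⁻¹ * (h 0) := by rw [ht]; rfl
    have ht1c : t 1 = r⁻¹ * (h 1) := by rw [ht]; rfl
    have hac : a = hh 0 * t 0 + hh 1 * t 1 := by rw [hadef, inner_E]
    have hbc : b = hh 0 * n 0 + hh 1 * n 1 := by rw [hbdef, inner_E]
    refine E_ext ?_ ?_
    · show hh 0 = a * t 0 + b * n 0
      rw [hac, hbc, hn0c, hn1c, ht0c, ht1c]
      field_simp
      linear_combination (-(hh 0)) * hr2
    · show hh 1 = a * t 1 + b * n 1
      rw [hac, hbc, hn0c, hn1c, ht0c, ht1c]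
      field_simp
      linear_combination (-(hh 1)) * hr2
  clear_value n t
  have hab : ¬(a / r = 0 ∧ b / r = 0) := by
    rintro ⟨ha0, hb0⟩
    have ha0' : a = 0 := by exact (div_eq_zero_iff.1 ha0).resolve_right hrne
    have hb0' : b = 0 := by exact (div_eq_zero_iff.1 hb0).resolve_right hrne
    apply hhne
    rw [hdecomp, ha0', hb0']; simp
  have hperphh : -perp hh = a • n - b • t := by
    rw [hdecomp, perp_add, perp_smul, perp_smul, ← htdef, htdef, perp_perp]
    rw [smul_neg]
    module
  have hLhs2 : γ (-perp h) = r * c := by rw [hperph, hhom r hr n, hcdef]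
  have hscale2 : r • ((a / r) • n - (b / r) • t) = a • n - b • t := by
    have e1 : r * (a / r) = a := by field_simp
    have e2 : r * (b / r) = b := by field_simp
    rw [smul_sub, smul_smul, smul_smul, e1, e2]
  have hLhs1 : γ (-perp hh) = r * γ ((a / r) • n - (b / r) • t) := by
    rw [hperphh, ← hscale2, hhom r hr]
  have hkeyn := hkey n hn (a / r) (b / r) hab
  rw [← htdef, ← hst, ← hcdef] at hkeyn
  have hkeyscaled : γ (-perp hh) ≤ r * (c * (1 + (a/r)^2 - a/r - (b/r)^2)
      - 2 * (a/r) * (b/r) * s + (b/r) * s + K n * (b/r)^2) := by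
    rw [hLhs1]
    exact mul_le_mul_of_nonneg_left hkeyn hr.le
  -- inner product computations
  have hnhh : ⟪n, hh⟫ = b := by rw [real_inner_comm]
  have hhhhh : ⟪hh, hh⟫ = a * a + b * b := by
    conv_lhs => rw [hdecomp]
    simp only [inner_add_left, inner_add_right, real_inner_smul_left, real_inner_smul_right]
    rw [htt, hnn, hntinner, htninner]
    ring
  have hhhh : ⟪hh, h⟫ = r * a := by rw [hht, real_inner_smul_right]
  have hwd : ⟪(r⁻¹ • hh : E), hh - h⟫ = r⁻¹ * (a * (a - r) + b * b) := by
    rw [real_inner_smul_left]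
    congr 1
    rw [inner_sub_right, hhhhh, hhhh]
    ring
  have hnw : ⟪n, (r⁻¹ • hh : E)⟫ = r⁻¹ * b := by
    rw [real_inner_smul_right, hnhh]
  have hnd : ⟪n, hh - h⟫ = b := by
    rw [inner_sub_right, hnhh, hht, real_inner_smul_right, hntinner]
    ring
  have hghh : ⟪g, hh⟫ = a * s + b * c := by
    conv_lhs => rw [hdecomp]
    simp only [inner_add_right, real_inner_smul_right]
    rw [hgn, ← hsdef]
  have hgw : ⟪g, (r⁻¹ • hh : E)⟫ = r⁻¹ * (a * s + b * c) := by
    rw [real_inner_smul_right, hghh]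
  have hgd : ⟪g, hh - h⟫ = (a - r) * s + b * c := by
    rw [inner_sub_right, hghh, hht, real_inner_smul_right, ← hsdef]
    ring
  rw [Z_inner, ← hgdef, hwd, hnw, hnd, hgw, hgd, ← hcdef, hLhs2]
  have hfinal : c * (r⁻¹ * (a * (a - r) + b * b)) - r⁻¹ * (a * s + b * c) * b
      - r⁻¹ * b * ((a - r) * s + b * c) + K n * (r⁻¹ * b) * b
      = r * (c * (1 + (a/r)^2 - a/r - (b/r)^2)
        - 2 * (a/r) * (b/r) * s + (b/r) * s + K n * (b/r)^2) - r * c := by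
    field_simp
    ring
  rw [hfinal]
  linarith [hkeyscaled]
end
end
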